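/- Let (ρ,v,q) ∈ ℝ×ℝ²×ℝ² with ρ ≠ 0, v ≠ 0 and v₁² + v₂² + ρv₂ = 0 (so that U(ρ,v,q) is a singular matrix, i.e. lies in the wave cone). Then for every twice continuously differentiable S : ℝ → ℝ there exist ξ ∈ ℝ³ \ {0} and real constants a, b such that, setting ψ(y) = a·S(⟨y,ξ⟩) and φ(y) = b·S'(⟨y,ξ⟩) for y = (x₁,x₂,t) ∈ ℝ³, one has D(φ,ψ)(y) = S''(⟨y,ξ⟩)·U(ρ,v,q) for all y ∈ ℝ³. In other words, every wave-cone direction with ρ ≠ 0 and v ≠ 0 is realized by a plane-wave potential. -/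

import Mathlib

noncomputable section

/-- A space-time point `(x₁, x₂, t) ∈ ℝ² × ℝ`. -/
abbrev Pt : Type := ℝ × ℝ × ℝ

/-- Partial derivative in the first space variable `x₁`. -/
def pd1 (f : Pt → ℝ) (y : Pt) : ℝ := fderiv ℝ f y (1, 0, 0)

/-- Partial derivative in the second space variable `x₂`. -/
def pd2 (f : Pt → ℝ) (y : Pt) : ℝ := fderiv ℝ f y (0, 1, 0)

/-- Partial derivative in the time variable `t`. -/
def pdt (f : Pt → ℝ) (y : Pt) : ℝ := fderiv ℝ f y (0, 0, 1)

/-- The `3 × 3` matrix `U(ρ, v, q)` associated to a state `(ρ, v, q) ∈ ℝ × ℝ² × ℝ²`,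
with rows `(-v₂ - ρ, v₁, 0)`, `(v₁, v₂, 0)`, `(q₁, q₂, ρ)`. -/
def Umat (ρ : ℝ) (v q : ℝ × ℝ) : Matrix (Fin 3) (Fin 3) ℝ :=
  !![-v.2 - ρ, v.1, 0;
     v.1, v.2, 0;
     q.1, q.2, ρ]

/-- The potential `D(φ, ψ)`: the matrix field with rows `(-∂₂∂₂ψ, ∂₁∂₂ψ, 0)`,
`(∂₁∂₂ψ, -∂₁∂₁ψ, 0)`, `(-∂ₜ∂₁ψ - ∂₂φ, -∂ₜ∂₂ψ + ∂₁φ, Δψ)`, where `Δψ = ∂₁∂₁ψ + ∂₂∂₂ψ`. -/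
def Dmat (φ ψ : Pt → ℝ) (y : Pt) : Matrix (Fin 3) (Fin 3) ℝ :=
  !![-pd2 (pd2 ψ) y, pd1 (pd2 ψ) y, 0;
     pd1 (pd2 ψ) y, -pd1 (pd1 ψ) y, 0;
     -pdt (pd1 ψ) y - pd2 φ y, -pdt (pd2 ψ) y + pd1 φ y, pd1 (pd1 ψ) y + pd2 (pd2 ψ) y]

/-- The Euclidean inner product `⟨y, ξ⟩` on `ℝ³ = ℝ × ℝ × ℝ`. -/
def dot3 (y ξ : Pt) : ℝ := y.1 * ξ.1 + y.2.1 * ξ.2.1 + y.2.2 * ξ.2.2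


private def Ldot (ξ : Pt) : Pt →L[ℝ] ℝ :=
  ξ.1 • (ContinuousLinearMap.fst ℝ ℝ (ℝ × ℝ))
  + ξ.2.1 • ((ContinuousLinearMap.fst ℝ ℝ ℝ).comp (ContinuousLinearMap.snd ℝ ℝ (ℝ × ℝ)))
  + ξ.2.2 • ((ContinuousLinearMap.snd ℝ ℝ ℝ).comp (ContinuousLinearMap.snd ℝ ℝ (ℝ × ℝ)))

private lemma Ldot_apply (ξ z : Pt) : Ldot ξ z = dot3 z ξ := by
  simp [Ldot, dot3]; ring

private lemma pd_planewave (c : ℝ) (g : ℝ → ℝ) (hg : Differentiable ℝ g) (ξ y e : Pt) :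
    fderiv ℝ (fun z => c * g (dot3 z ξ)) y e = c * deriv g (dot3 y ξ) * dot3 e ξ := by
  have hL : HasFDerivAt (fun z => dot3 z ξ) (Ldot ξ) y := by
    have h := (Ldot ξ).hasFDerivAt (x := y)
    convert h using 1
    exact funext fun z => (Ldot_apply ξ z).symm
  have hd : HasFDerivAt (fun z => c * g (dot3 z ξ))
      (c • ((deriv g (dot3 y ξ)) • Ldot ξ)) y :=
    (((hg (dot3 y ξ)).hasDerivAt).comp_hasFDerivAt y hL).const_mul c
  rw [hd.fderiv]
  simp [Ldot_apply]
  ring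

private lemma nonneg_pair (x y : ℝ) (h : 0 ≤ x * y) (h2 : 0 < x + y) : 0 ≤ x ∧ 0 ≤ y := by
  constructor <;> nlinarith

/-- **Plane waves with potentials.** Every wave-cone direction `U(ρ, v, q)` with `ρ ≠ 0`
and `v ≠ 0` is realized by a plane-wave potential: for any `C²` profile `S` there are
`ξ ≠ 0` and constants `a, b` such that with `ψ = a S(⟨·, ξ⟩)` and `φ = b S'(⟨·, ξ⟩)` one
has `D(φ, ψ)(y) = S''(⟨y, ξ⟩) • U(ρ, v, q)` for all `y`. -/
theorem wave_cone_direction_has_potential (ρ : ℝ) (v q : ℝ × ℝ)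
    (hρ : ρ ≠ 0) (hv : v ≠ 0) (hcone : v.1 ^ 2 + v.2 ^ 2 + ρ * v.2 = 0)
    (S : ℝ → ℝ) (hS : ContDiff ℝ 2 S) :
    ∃ ξ : Pt, ξ ≠ 0 ∧ ∃ a b : ℝ,
      ∀ y : Pt,
        Dmat (fun z => b * deriv S (dot3 z ξ)) (fun z => a * S (dot3 z ξ)) y
          = deriv (deriv S) (dot3 y ξ) • Umat ρ v q := by
  have hS1 : Differentiable ℝ S := hS.differentiable (by norm_num)
  have hS2 : Differentiable ℝ (deriv S) := by
    have h : ContDiff ℝ ((1:ℕ∞)+1) S := by convert hS using 2; norm_num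
    exact ((contDiff_succ_iff_deriv.mp h).2.2).differentiable (by simp)
  set a : ℝ := if 0 < ρ then 1 else -1 with ha_def
  have ha2 : a * a = 1 := by
    by_cases h : 0 < ρ <;> simp [ha_def, h]
  have haρ : 0 < a * ρ := by
    by_cases h : 0 < ρ
    · simpa [ha_def, h] using h
    · have h' : ρ < 0 := lt_of_le_of_ne (not_lt.mp h) hρ
      simp [ha_def, h]; linarith
  have hprod : (-(a * v.2)) * (a * (v.2 + ρ)) = v.1 ^ 2 := by
    linear_combination ((-v.2) * (v.2 + ρ)) * ha2 - hcone
  obtain ⟨hx, hy⟩ := nonneg_pair _ _ (hprod ▸ sq_nonneg v.1) (by ring_nf; linarith [haρ])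
  set sgn : ℝ := if 0 ≤ v.1 then 1 else -1 with hsgn_def
  have hsgn2 : sgn * sgn = 1 := by
    by_cases h : 0 ≤ v.1 <;> simp [hsgn_def, h]
  set ξ₁ : ℝ := Real.sqrt (-(a * v.2)) with hξ1_def
  set ξ₂ : ℝ := (a * sgn) * Real.sqrt (a * (v.2 + ρ)) with hξ2_def
  have hξ1sq : ξ₁ ^ 2 = -(a * v.2) := Real.sq_sqrt hx
  have hξ2sq : ξ₂ ^ 2 = a * (v.2 + ρ) := by
    rw [hξ2_def, mul_pow, mul_pow, Real.sq_sqrt hy]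
    linear_combination (sgn * sgn * (a * (v.2 + ρ))) * ha2 + (a * (v.2 + ρ)) * hsgn2
  have h1 : a * ξ₁ ^ 2 = -v.2 := by rw [hξ1sq]; linear_combination (-v.2) * ha2
  have h2 : a * ξ₂ ^ 2 = v.2 + ρ := by rw [hξ2sq]; linear_combination (v.2 + ρ) * ha2
  have h3 : a * (ξ₁ * ξ₂) = v.1 := by
    rw [hξ2_def, hξ1_def]
    have : Real.sqrt (-(a * v.2)) * Real.sqrt (a * (v.2 + ρ)) = |v.1| := by
      rw [← Real.sqrt_mul hx, hprod, Real.sqrt_sq_eq_abs]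
    calc a * (Real.sqrt (-(a * v.2)) * (a * sgn * Real.sqrt (a * (v.2 + ρ))))
        = (a * a) * sgn * (Real.sqrt (-(a * v.2)) * Real.sqrt (a * (v.2 + ρ))) := by ring
      _ = sgn * |v.1| := by rw [ha2, this]; ring
      _ = v.1 := by
          by_cases h : 0 ≤ v.1
          · simp [hsgn_def, h, abs_of_nonneg h]
          · simp [hsgn_def, h, abs_of_neg (not_le.mp h)]
  have hsum : ξ₁ ^ 2 + ξ₂ ^ 2 = a * ρ := by
    rw [hξ1sq, hξ2sq]; ring
  set ξₜ : ℝ := (-q.1 * ξ₁ - q.2 * ξ₂) / ρ with hξt_def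
  set b : ℝ := a * (q.2 * ξ₁ - q.1 * ξ₂) / ρ with hb_def
  set ξ : Pt := (ξ₁, ξ₂, ξₜ) with hξ_def
  have hξne : ξ ≠ 0 := by
    intro h
    have h1' : ξ₁ = 0 := congrArg Prod.fst h
    have h2' : ξ₂ = 0 := congrArg (fun p : Pt => p.2.1) h
    rw [h1', h2'] at hsum
    simp at hsum
    nlinarith [haρ]
  have hq1 : -(a * (ξ₁ * ξₜ)) - b * ξ₂ = q.1 := by
    rw [hξt_def, hb_def]
    linear_combination (a * q.1 / ρ) * hsum + q.1 * ha2 + (a ^ 2 * q.1) * mul_inv_cancel₀ hρ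
  have hq2 : -(a * (ξ₂ * ξₜ)) + b * ξ₁ = q.2 := by
    rw [hξt_def, hb_def]
    linear_combination (a * q.2 / ρ) * hsum + q.2 * ha2 + (a ^ 2 * q.2) * mul_inv_cancel₀ hρ
  refine ⟨ξ, hξne, a, b, fun y => ?_⟩
  have hd1 : dot3 (1, 0, 0) ξ = ξ₁ := by simp [dot3, hξ_def]
  have hd2 : dot3 (0, 1, 0) ξ = ξ₂ := by simp [dot3, hξ_def]
  have hdt : dot3 (0, 0, 1) ξ = ξₜ := by simp [dot3, hξ_def]
  have E1 : pd1 (fun z => a * S (dot3 z ξ)) = fun z => (a * ξ₁) * deriv S (dot3 z ξ) :=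
    funext fun z => by rw [pd1, pd_planewave a S hS1, hd1]; ring
  have E2 : pd2 (fun z => a * S (dot3 z ξ)) = fun z => (a * ξ₂) * deriv S (dot3 z ξ) :=
    funext fun z => by rw [pd2, pd_planewave a S hS1, hd2]; ring
  have F11 : pd1 (pd1 (fun z => a * S (dot3 z ξ))) y
      = a * ξ₁ * ξ₁ * deriv (deriv S) (dot3 y ξ) := by
    rw [E1, pd1, pd_planewave _ _ hS2, hd1]; ring
  have F12 : pd1 (pd2 (fun z => a * S (dot3 z ξ))) y
      = a * ξ₁ * ξ₂ * deriv (deriv S) (dot3 y ξ) := by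
    rw [E2, pd1, pd_planewave _ _ hS2, hd1]; ring
  have F22 : pd2 (pd2 (fun z => a * S (dot3 z ξ))) y
      = a * ξ₂ * ξ₂ * deriv (deriv S) (dot3 y ξ) := by
    rw [E2, pd2, pd_planewave _ _ hS2, hd2]; ring
  have Ft1 : pdt (pd1 (fun z => a * S (dot3 z ξ))) y
      = a * ξ₁ * ξₜ * deriv (deriv S) (dot3 y ξ) := by
    rw [E1, pdt, pd_planewave _ _ hS2, hdt]; ring
  have Ft2 : pdt (pd2 (fun z => a * S (dot3 z ξ))) y
      = a * ξ₂ * ξₜ * deriv (deriv S) (dot3 y ξ) := by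
    rw [E2, pdt, pd_planewave _ _ hS2, hdt]; ring
  have G1 : pd1 (fun z => b * deriv S (dot3 z ξ)) y
      = b * ξ₁ * deriv (deriv S) (dot3 y ξ) := by
    rw [pd1, pd_planewave _ _ hS2, hd1]; ring
  have G2 : pd2 (fun z => b * deriv S (dot3 z ξ)) y
      = b * ξ₂ * deriv (deriv S) (dot3 y ξ) := by
    rw [pd2, pd_planewave _ _ hS2, hd2]; ring
  set c : ℝ := deriv (deriv S) (dot3 y ξ) with hc_def
  rw [Dmat, F11, F12, F22, Ft1, Ft2, G1, G2, Umat]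
  ext i j
  fin_cases i <;> fin_cases j <;> simp [Matrix.smul_apply] <;>
    first
      | linear_combination (-c) * h2
      | linear_combination c * h2
      | linear_combination (-2*c) * h2
      | linear_combination (2*c) * h2
      | linear_combination c * h3
      | linear_combination (-c) * h3
      | linear_combination (2*c) * h3
      | linear_combination (-2*c) * h3
      | linear_combination c * h1
      | linear_combination (-c) * h1
      | linear_combination (2*c) * h1
      | linear_combination (-2*c) * h1
      | linear_combination c * hq1
      | linear_combination (-c) * hq1
      | linear_combination (2*c) * hq1
      | linear_combination (-2*c) * hq1
      | linear_combination c * hq2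
      | linear_combination (-c) * hq2
      | linear_combination (2*c) * hq2
      | linear_combination (-2*c) * hq2
      | linear_combination c * h1 + c * h2
      | linear_combination (-c) * h1 - c * h2
      | linear_combination 2*c * h1 + 2*c * h2
      | linear_combination (-2*c) * h1 - 2*c * h2
      | ring
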